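/- Let g : ℝ → Matrix (Fin n) (Fin n) ℝ be such that g'(σ)·(R/(π t)) ≥ (π/R)·id/(t−1)² in the sense of symmetric matrices, where t = e^{πσ/R} and σ > 0. Then 1/det(g'(σ)) ≤ (R²/π²)ⁿ (e^{σπ/R} + e^{−σπ/R} − 2)ⁿ. -/

import Mathlib

open Matrix Real

/-- If `g'(σ)·(R/(π t)) ≥ (π/R)·id/(t−1)²` in the sense of symmetric matrices, where
`t = e^{πσ/R}` and `σ > 0`, then
`1/det(g'(σ)) ≤ (R²/π²)ⁿ (e^{σπ/R} + e^{−σπ/R} − 2)ⁿ`. -/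
theorem det_lower_bound_from_herglotz (n : ℕ) (R : ℝ) (hR : 0 < R)
    (g' : ℝ → Matrix (Fin n) (Fin n) ℝ) (σ : ℝ) (hσ : 0 < σ)
    (hsymm : (g' σ).IsSymm)
    (hineq :
      ((R / (π * Real.exp (π * σ / R))) • g' σ -
        ((π / R) * (1 / (Real.exp (π * σ / R) - 1) ^ 2)) •
          (1 : Matrix (Fin n) (Fin n) ℝ)).PosSemidef) :
    1 / (g' σ).det ≤
      (R ^ 2 / π ^ 2) ^ n * (Real.exp (σ * π / R) + Real.exp (-(σ * π) / R) - 2) ^ n := by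
  have hπ : (0:ℝ) < π := Real.pi_pos
  set t := Real.exp (π * σ / R) with ht
  have ht1 : 1 < t := by
    rw [ht]
    calc (1:ℝ) = Real.exp 0 := by simp
    _ < Real.exp (π * σ / R) := Real.exp_lt_exp.mpr (by positivity)
  have ht0 : 0 < t := lt_trans one_pos ht1
  set a : ℝ := R / (π * t) with ha
  set c : ℝ := (π / R) * (1 / (t - 1) ^ 2) with hc
  have ht1' : 0 < t - 1 := sub_pos.mpr ht1
  have ha0 : 0 < a := by positivity
  have hc0 : 0 < c := by positivity
  have hA : (g' σ).IsHermitian := by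
    rw [Matrix.IsHermitian, conjTranspose_eq_transpose_of_trivial]; exact hsymm
  have heig : ∀ i, c / a ≤ hA.eigenvalues i := by
    intro i
    have hv := hA.mulVec_eigenvectorBasis i
    set v : Fin n → ℝ := ⇑(hA.eigenvectorBasis i) with hvdef
    have hnorm : ‖hA.eigenvectorBasis i‖ = 1 := hA.eigenvectorBasis.orthonormal.1 i
    have hvv : v ⬝ᵥ v = 1 := by
      have h1 : (inner ℝ (hA.eigenvectorBasis i) (hA.eigenvectorBasis i) : ℝ) = 1 := by
        rw [real_inner_self_eq_norm_sq, hnorm]; norm_num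
      have h2 : (inner ℝ (hA.eigenvectorBasis i) (hA.eigenvectorBasis i) : ℝ) = v ⬝ᵥ v := by
        simp only [PiLp.inner_apply, RCLike.inner_apply, conj_trivial, dotProduct]
        rfl
      rw [← h2, h1]
    have hq := hineq.dotProduct_mulVec_nonneg v
    have hMv : ((a • g' σ - c • (1 : Matrix (Fin n) (Fin n) ℝ)) *ᵥ v)
        = (a * hA.eigenvalues i - c) • v := by
      rw [Matrix.sub_mulVec, Matrix.smul_mulVec, Matrix.smul_mulVec,
        Matrix.one_mulVec, hv]
      ext j
      simp only [Pi.smul_apply, Pi.sub_apply, smul_eq_mul]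
      ring
    rw [hMv] at hq
    have : star v ⬝ᵥ (a * hA.eigenvalues i - c) • v = a * hA.eigenvalues i - c := by
      rw [star_trivial, dotProduct_smul, hvv, smul_eq_mul, mul_one]
    rw [this] at hq
    rw [div_le_iff₀ ha0]
    nlinarith [hq]
  have hdet : (c / a) ^ n ≤ (g' σ).det := by
    have := hA.det_eq_prod_eigenvalues
    rw [this]
    calc ((c / a) ^ n : ℝ) = ∏ _i : Fin n, (c / a) := by simp [div_pow]
    _ ≤ ∏ i, hA.eigenvalues i := by
        apply Finset.prod_le_prod
        · intro i _; positivity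
        · intro i _; exact heig i
  have hca : 0 < (c / a) ^ n := by positivity
  have h1 : 1 / (g' σ).det ≤ 1 / (c / a) ^ n :=
    one_div_le_one_div_of_le hca hdet
  have h2 : (1 : ℝ) / (c / a) ^ n = (a / c) ^ n := by
    rw [one_div, ← inv_pow, inv_div]
  have hexp1 : Real.exp (σ * π / R) = t := by rw [ht, mul_comm σ π]
  have hexp2 : Real.exp (-(σ * π) / R) = t⁻¹ := by
    rw [← Real.exp_neg]
    congr 1
    ring
  have h3 : a / c = R ^ 2 / π ^ 2 * (Real.exp (σ * π / R) + Real.exp (-(σ * π) / R) - 2) := by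
    rw [hexp1, hexp2, ha, hc]
    field_simp
    ring
  calc 1 / (g' σ).det ≤ 1 / (c / a) ^ n := h1
  _ = (a / c) ^ n := h2
  _ = (R ^ 2 / π ^ 2) ^ n * (Real.exp (σ * π / R) + Real.exp (-(σ * π) / R) - 2) ^ n := by
      rw [h3, mul_pow]
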